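/- Let f(x) = -x/(1+x). Then f(f(x)) = x, and the Riordan array ((1+2x)/((1+x)^4(1-x)), -x/(1+x)) is an involution in the Riordan group; moreover its first function equals (f(x)/x)·f'(x)·(f(x)-1)/(x-1). -/

import Mathlib

open PowerSeries

/-- Composition f ∘ g of formal power series (intended for g with zero constant term). -/
noncomputable def comp (f g : ℚ⟦X⟧) : ℚ⟦X⟧ :=
  PowerSeries.mk fun n => ∑ k ∈ Finset.range (n + 1),
    PowerSeries.coeff k f * PowerSeries.coeff n (g ^ k)

/-- (f(x) - f(0))/x. -/
noncomputable def shift (f : ℚ⟦X⟧) : ℚ⟦X⟧ := PowerSeries.mk fun n => PowerSeries.coeff (n + 1) f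

/-- Action of the almost Riordan array (a; g, f) on a power series b. -/
noncomputable def aact (a g f b : ℚ⟦X⟧) : ℚ⟦X⟧ :=
  PowerSeries.C (PowerSeries.constantCoeff b) * a + PowerSeries.X * g * comp (shift b) f

/-- Product in the group of almost Riordan arrays of order 1 (triples (a; g, f)). -/
noncomputable def amul (M N : ℚ⟦X⟧ × ℚ⟦X⟧ × ℚ⟦X⟧) : ℚ⟦X⟧ × ℚ⟦X⟧ × ℚ⟦X⟧ :=
  (aact M.1 M.2.1 M.2.2 N.1, M.2.1 * comp N.2.1 M.2.2, comp N.2.2 M.2.2)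

/-- Product in the Riordan group (pairs (g, f)). -/
noncomputable def rmul (M N : ℚ⟦X⟧ × ℚ⟦X⟧) : ℚ⟦X⟧ × ℚ⟦X⟧ :=
  (M.1 * comp N.1 M.2, comp N.2 M.2)

section CompLemmas

private lemma coeff_pow_of_lt {f : ℚ⟦X⟧} (hf : constantCoeff f = 0) {k n : ℕ} (h : n < k) :
    coeff n (f ^ k) = 0 := by
  have hd : (X : ℚ⟦X⟧) ^ k ∣ f ^ k := pow_dvd_pow_of_dvd (X_dvd_iff.mpr hf) k
  exact X_pow_dvd_iff.mp hd n h

private lemma coeff_comp {f : ℚ⟦X⟧} (hf : constantCoeff f = 0) (a : ℚ⟦X⟧) {n N : ℕ}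
    (h : n < N) :
    coeff n (comp a f) = ∑ k ∈ Finset.range N, coeff k a * coeff n (f ^ k) := by
  rw [comp, coeff_mk]
  apply Finset.sum_subset (Finset.range_subset_range.mpr h)
  intro k hk hk'
  rw [coeff_pow_of_lt hf (by simp at hk' ⊢; omega), mul_zero]

private lemma comp_add (a b f : ℚ⟦X⟧) : comp (a + b) f = comp a f + comp b f := by
  ext n
  simp [comp, add_mul, Finset.sum_add_distrib]

private lemma comp_neg (a f : ℚ⟦X⟧) : comp (-a) f = -comp a f := by
  ext n
  simp [comp, neg_mul, Finset.sum_neg_distrib]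

private lemma comp_C (c : ℚ) (f : ℚ⟦X⟧) : comp (PowerSeries.C c) f = PowerSeries.C c := by
  ext n
  simp [comp, coeff_C, ite_mul, coeff_one]

private lemma comp_one (f : ℚ⟦X⟧) : comp 1 f = 1 := by
  simpa using comp_C 1 f

private lemma comp_X {f : ℚ⟦X⟧} (hf : constantCoeff f = 0) : comp X f = f := by
  ext n
  rcases n with _ | n
  · simpa [comp] using hf.symm
  · rw [comp, coeff_mk]
    rw [Finset.sum_eq_single 1]
    · simp
    · intro k hk hk1
      simp [coeff_X, hk1]
    · intro h
      simp at h

private lemma sum_aux {M : Type*} [AddCommMonoid M] (n : ℕ) (T : ℕ → ℕ → M)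
    (hT : ∀ i j, n < i + j → T i j = 0) :
    ∑ k ∈ Finset.range (n+1), ∑ q ∈ Finset.HasAntidiagonal.antidiagonal k, T q.1 q.2
      = ∑ i ∈ Finset.range (n+1), ∑ j ∈ Finset.range (n+1), T i j := by
  have hdisj : (↑(Finset.range (n+1)) : Set ℕ).PairwiseDisjoint
      (fun k => (Finset.HasAntidiagonal.antidiagonal k : Finset (ℕ × ℕ))) := by
    intro x _ y _ hxy
    simp only [Finset.disjoint_left, Finset.HasAntidiagonal.mem_antidiagonal]
    rintro p rfl h
    exact hxy h
  rw [← Finset.sum_product', ← Finset.sum_biUnion hdisj]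
  apply Finset.sum_subset
  · intro p hp
    simp only [Finset.mem_biUnion, Finset.HasAntidiagonal.mem_antidiagonal, Finset.mem_range] at hp
    obtain ⟨k, hk, rfl⟩ := hp
    simp only [Finset.mem_product, Finset.mem_range]
    omega
  · intro p hp hpn
    apply hT
    simp only [Finset.mem_biUnion, Finset.HasAntidiagonal.mem_antidiagonal, Finset.mem_range] at hpn
    by_contra h
    exact hpn ⟨p.1 + p.2, by omega, rfl⟩

private lemma comp_mul {f : ℚ⟦X⟧} (hf : constantCoeff f = 0) (a b : ℚ⟦X⟧) :
    comp (a * b) f = comp a f * comp b f := by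
  ext n
  rw [coeff_comp hf _ (Nat.lt_succ_self n), PowerSeries.coeff_mul]
  have hT : ∀ i j : ℕ, n < i + j →
      coeff i a * coeff j b * coeff n (f ^ (i+j)) = 0 := by
    intro i j h; rw [coeff_pow_of_lt hf h, mul_zero]
  calc
    ∑ k ∈ Finset.range (n+1), coeff k (a*b) * coeff n (f^k)
        = ∑ k ∈ Finset.range (n+1), ∑ q ∈ Finset.HasAntidiagonal.antidiagonal k,
            coeff q.1 a * coeff q.2 b * coeff n (f ^ (q.1 + q.2)) := by
          refine Finset.sum_congr rfl fun k _ => ?_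
          rw [PowerSeries.coeff_mul, Finset.sum_mul]
          refine Finset.sum_congr rfl fun q hq => ?_
          rw [Finset.HasAntidiagonal.mem_antidiagonal] at hq
          rw [hq]
    _ = ∑ i ∈ Finset.range (n+1), ∑ j ∈ Finset.range (n+1),
            coeff i a * coeff j b * coeff n (f ^ (i + j)) := sum_aux n _ hT
    _ = ∑ p ∈ Finset.HasAntidiagonal.antidiagonal n, coeff p.1 (comp a f) * coeff p.2 (comp b f) := by
          symm
          calc
            ∑ p ∈ Finset.HasAntidiagonal.antidiagonal n, coeff p.1 (comp a f) * coeff p.2 (comp b f)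
                = ∑ p ∈ Finset.HasAntidiagonal.antidiagonal n, ∑ i ∈ Finset.range (n+1),
                    ∑ j ∈ Finset.range (n+1),
                    (coeff i a * coeff p.1 (f^i)) * (coeff j b * coeff p.2 (f^j)) := by
                  refine Finset.sum_congr rfl fun p hp => ?_
                  rw [Finset.HasAntidiagonal.mem_antidiagonal] at hp
                  rw [coeff_comp hf a (show p.1 < n+1 by omega),
                    coeff_comp hf b (show p.2 < n+1 by omega), Finset.sum_mul_sum]
            _ = ∑ i ∈ Finset.range (n+1), ∑ p ∈ Finset.HasAntidiagonal.antidiagonal n,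
                    ∑ j ∈ Finset.range (n+1),
                    (coeff i a * coeff p.1 (f^i)) * (coeff j b * coeff p.2 (f^j)) :=
                  Finset.sum_comm
            _ = ∑ i ∈ Finset.range (n+1), ∑ j ∈ Finset.range (n+1),
                    ∑ p ∈ Finset.HasAntidiagonal.antidiagonal n,
                    (coeff i a * coeff p.1 (f^i)) * (coeff j b * coeff p.2 (f^j)) :=
                  Finset.sum_congr rfl fun i _ => Finset.sum_comm
            _ = ∑ i ∈ Finset.range (n+1), ∑ j ∈ Finset.range (n+1),
                    coeff i a * coeff j b * coeff n (f ^ (i + j)) := by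
                  refine Finset.sum_congr rfl fun i _ => Finset.sum_congr rfl fun j _ => ?_
                  have h1 : ∑ p ∈ Finset.HasAntidiagonal.antidiagonal n,
                      (coeff i a * coeff p.1 (f^i)) * (coeff j b * coeff p.2 (f^j))
                      = coeff i a * coeff j b *
                        ∑ p ∈ Finset.HasAntidiagonal.antidiagonal n, coeff p.1 (f^i) * coeff p.2 (f^j) := by
                    rw [Finset.mul_sum]
                    exact Finset.sum_congr rfl fun p _ => by ring
                  rw [h1, ← PowerSeries.coeff_mul, ← pow_add]

private lemma comp_pow {f : ℚ⟦X⟧} (hf : constantCoeff f = 0) (a : ℚ⟦X⟧) (k : ℕ) :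
    comp (a ^ k) f = (comp a f) ^ k := by
  induction k with
  | zero => simpa using comp_one f
  | succ k ih => rw [pow_succ, comp_mul hf, ih, pow_succ]

private lemma derivativeFun_neg (a : ℚ⟦X⟧) :
    derivativeFun (-a) = -derivativeFun a := by
  ext n
  exact congrArg (coeff n) (map_neg (derivative ℚ) a)

private lemma derivativeFun_X : derivativeFun (X : ℚ⟦X⟧) = 1 :=
  PowerSeries.derivative_X

end CompLemmas

/-- With f = -x/(1+x): f∘f = x, the Riordan array ((1+2x)/((1+x)^4(1-x)), f) is an
involution, and its first function equals (f/x)·f'·(f-1)/(x-1). -/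
theorem schroeder_like_involution :
    let f : ℚ⟦X⟧ := -(X * (1 + X)⁻¹)
    let g : ℚ⟦X⟧ := (1 + 2 * X) * ((1 + X) ^ 4 * (1 - X))⁻¹
    comp f f = X ∧
    rmul (g, f) (g, f) = (1, X) ∧
    g * X * (X - 1) = f * PowerSeries.derivativeFun f * (f - 1) := by
  intro f g
  set u : ℚ⟦X⟧ := (1 + X)⁻¹ with hu_def
  have hu : ((1 : ℚ⟦X⟧) + X) * u = 1 :=
    PowerSeries.mul_inv_cancel _ (by simp)
  have hcu : constantCoeff u = 1 := by
    have h := congrArg (constantCoeff) hu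
    simpa using h
  have hune : u ≠ 0 := by
    intro h; rw [h] at hcu; simp at hcu
  have hf0 : constantCoeff f = 0 := by
    show constantCoeff (-(X * u)) = 0
    simp
  have hfu : f = -(X * u) := rfl
  -- composition facts
  have hcompX : comp X f = f := comp_X hf0
  have hcomp1f : comp ((1 : ℚ⟦X⟧) + X) f = u := by
    rw [comp_add, comp_one, hcompX, hfu]
    linear_combination -hu
  have hcuf : u * comp u f = 1 := by
    have h : comp (((1 : ℚ⟦X⟧) + X) * u) f = 1 := by rw [hu, comp_one]
    rw [comp_mul hf0, hcomp1f] at h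
    exact h
  have hcompu : comp u f = 1 + X := by
    apply mul_left_cancel₀ hune
    rw [hcuf]
    linear_combination -hu
  -- Part 1
  have part1 : comp f f = X := by
    rw [hfu, comp_neg, comp_mul hf0, hcompX, hcompu, hfu]
    linear_combination X * hu
  refine ⟨part1, ?_, ?_⟩
  · -- Part 2
    have hw : (((1 : ℚ⟦X⟧) + X) ^ 4 * (1 - X)) * ((1 + X) ^ 4 * (1 - X))⁻¹ = 1 :=
      PowerSeries.mul_inv_cancel _ (by simp)
    have hcomp2 : comp ((1 : ℚ⟦X⟧) + 2 * X) f = (1 - X) * u := by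
      have e : (1 : ℚ⟦X⟧) + 2 * X = (1 + X) + X := by ring
      rw [e, comp_add, hcomp1f, hcompX, hfu]
      ring
    have hcomp1mX : comp ((1 : ℚ⟦X⟧) - X) f = (1 + 2 * X) * u := by
      have e : (1 : ℚ⟦X⟧) - X = 1 + -X := by ring
      rw [e, comp_add, comp_one, comp_neg, hcompX, hfu]
      linear_combination -hu
    have hcompw : comp (((1 : ℚ⟦X⟧) + X) ^ 4 * (1 - X)) f = (1 + 2 * X) * u ^ 5 := by
      rw [comp_mul hf0, comp_pow hf0, hcomp1f, hcomp1mX]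
      ring
    have hs : ((1 : ℚ⟦X⟧) + 2 * X) * u ^ 5 ≠ 0 := by
      intro h
      have h2 := congrArg (constantCoeff) h
      simp [hcu] at h2
    have hv2 : ((1 : ℚ⟦X⟧) + 2 * X) * (1 + 2 * X)⁻¹ = 1 :=
      PowerSeries.mul_inv_cancel _ (by simp)
    have hcompwinv : comp (((1 : ℚ⟦X⟧) + X) ^ 4 * (1 - X))⁻¹ f
        = (1 + 2 * X)⁻¹ * (1 + X) ^ 5 := by
      apply mul_left_cancel₀ hs
      have h1 : ((1 + 2 * X) * u ^ 5) * comp (((1 : ℚ⟦X⟧) + X) ^ 4 * (1 - X))⁻¹ f = 1 := by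
        rw [← hcompw, ← comp_mul hf0, hw, comp_one]
      rw [h1]
      linear_combination
        (-((((1:ℚ⟦X⟧)+X)*u)^5)) * hv2
        - ((((1:ℚ⟦X⟧)+X)*u)^4 + ((1+X)*u)^3 + ((1+X)*u)^2 + (1+X)*u + 1) * hu
    show ((1 + 2 * X) * ((1 + X) ^ 4 * (1 - X))⁻¹ * comp g f, comp f f) = (1, X)
    rw [part1]
    refine Prod.ext ?_ rfl
    show (1 + 2 * X) * ((1 + X) ^ 4 * (1 - X))⁻¹ *
        comp ((1 + 2 * X) * ((1 + X) ^ 4 * (1 - X))⁻¹) f = 1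
    rw [comp_mul hf0, hcomp2, hcompwinv]
    linear_combination
      ((((1:ℚ⟦X⟧)+X)*u) * ((1+X)^4*(1-X)*((1+X)^4*(1-X))⁻¹)) * hv2
      + (((1:ℚ⟦X⟧)+X)^4*(1-X)*((1+X)^4*(1-X))⁻¹) * hu
      + hw
  · -- Part 3
    have h1Xne : ((1 : ℚ⟦X⟧) + X) ≠ 0 := by
      intro h
      have h2 := congrArg (constantCoeff) h
      simp at h2
    have hd1X : derivativeFun ((1 : ℚ⟦X⟧) + X) = 1 := by
      rw [derivativeFun_add, derivativeFun_one, derivativeFun_X, zero_add]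
    have hdu : derivativeFun u = -(u * u) := by
      have h0 : derivativeFun (((1 : ℚ⟦X⟧) + X) * u) = 0 := by
        rw [hu, derivativeFun_one]
      rw [derivativeFun_mul, hd1X, smul_eq_mul, smul_eq_mul, mul_one] at h0
      apply mul_left_cancel₀ h1Xne
      linear_combination h0 + u * hu
    have hdf : derivativeFun f = X * (u * u) - u := by
      rw [hfu, derivativeFun_neg, derivativeFun_mul, hdu, derivativeFun_X, smul_eq_mul,
        smul_eq_mul, mul_one]
      ring
    have hw : (((1 : ℚ⟦X⟧) + X) ^ 4 * (1 - X)) * ((1 + X) ^ 4 * (1 - X))⁻¹ = 1 :=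
      PowerSeries.mul_inv_cancel _ (by simp)
    have hwne : (((1 : ℚ⟦X⟧) + X) ^ 4 * (1 - X)) ≠ 0 := by
      intro h
      have h2 := congrArg (constantCoeff) h
      simp at h2
    show (1 + 2 * X) * ((1 + X) ^ 4 * (1 - X))⁻¹ * X * (X - 1)
        = f * derivativeFun f * (f - 1)
    apply mul_left_cancel₀ hwne
    rw [hdf, hfu]
    linear_combination (X * (X - 1) * (1 + 2*X)) * hw +
      (X*(X-1)*(X^2*((((1:ℚ⟦X⟧)+X)*u)^3+((1+X)*u)^2+(1+X)*u+1) - (1+X)^2*((1+X)*u+1))) * hu
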